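/- (Theorem 2, estimate.) Assume h(τ) > 0, let q > 1, define ζ(t) := [h(τ)·ν(τ) + ∫_τ^t β(ξ)·ν(ξ) dξ]/ν(t) for t ≥ τ, and assume α(t)·σ(t)^p·(q·ζ(t))^p ≤ (q−1)·β(t) for all t ≥ τ. Then ‖u(t)‖ ≤ q·ζ(t) for all t ≥ τ. -/

import Mathlib

open Real MeasureTheory Set Filter ComplexInnerProductSpace

/-- `ν(t) = exp(−∫₀ᵗ γ(ξ) dξ)`. -/
noncomputable def nu (γ : ℝ → ℝ) (t : ℝ) : ℝ := Real.exp (-∫ ξ in (0:ℝ)..t, γ ξ)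

/-- `σ(t) = exp(−∫_{t−τ}^t γ(ξ) dξ)`. -/
noncomputable def sig (γ : ℝ → ℝ) (τ t : ℝ) : ℝ :=
  Real.exp (-∫ ξ in (t - τ)..t, γ ξ)

/-- Theorem 2.7 (Theorem 2), the estimate `‖u(t)‖ ≤ q ζ(t)` for `t ≥ τ`. -/
theorem stmt_12
    {H : Type*} [NormedAddCommGroup H] [InnerProductSpace ℂ H]
    (τ p : ℝ) (hτ : 0 < τ) (hp : 1 < p)
    (γ α β : ℝ → ℝ)
    (hγc : Continuous γ) (hαc : Continuous α) (hβc : Continuous β)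
    (hα : ∀ t, 0 ≤ α t) (hβ : ∀ t, 0 ≤ β t)
    (u : ℝ → H) (u' : ℝ → H)
    (huc : ContinuousOn u (Ici (-τ)))
    (hud : ∀ t, 0 ≤ t → HasDerivWithinAt u (u' t) (Ici (0:ℝ)) t)
    (hnd : ∀ t, 0 ≤ t → DifferentiableWithinAt ℝ (fun s => ‖u s‖) (Ici (0:ℝ)) t)
    (huineq : ∀ t, 0 ≤ t → (⟪u t, u' t⟫).re ≤
      γ t * ‖u t‖ ^ 2 + α t * ‖u t‖ * ‖u (t - τ)‖ ^ p + β t * ‖u t‖)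
    (h h' : ℝ → ℝ)
    (hh0 : ∀ t, -τ ≤ t → 0 ≤ h t)
    (hhc : ContinuousOn h (Ici (-τ)))
    (hhd : ∀ t, 0 ≤ t → HasDerivWithinAt h (h' t) (Ici (0:ℝ)) t)
    (hheq : ∀ t, 0 ≤ t → h' t = γ t * h t + α t * h (t - τ) ^ p + β t)
    (hinit : ∀ t, -τ ≤ t → t ≤ 0 → h t = ‖u t‖)
    (hhτ : 0 < h τ)
    (q : ℝ) (hq : 1 < q)
    (ζ : ℝ → ℝ)
    (hζ : ∀ t, τ ≤ t →
      ζ t = (h τ * nu γ τ + ∫ ξ in τ..t, β ξ * nu γ ξ) / nu γ t)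
    (hcond : ∀ t, τ ≤ t → α t * sig γ τ t ^ p * (q * ζ t) ^ p ≤ (q - 1) * β t) :
    ∀ t, τ ≤ t → ‖u t‖ ≤ q * ζ t := by
  have hτ0 : (0:ℝ) ≤ τ := hτ.le
  have hp0 : (0:ℝ) ≤ p := by linarith
  -- properties of ν
  have hν_pos : ∀ s : ℝ, 0 < nu γ s := fun s => Real.exp_pos _
  have hνderiv : ∀ s : ℝ, HasDerivAt (nu γ) (nu γ s * -γ s) s := by
    intro s
    have h1 : HasDerivAt (fun r => ∫ ξ in (0:ℝ)..r, γ ξ) (γ s) s :=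
      (hγc.integral_hasStrictDerivAt 0 s).hasDerivAt
    exact h1.neg.exp
  have hνcont : Continuous (nu γ) :=
    continuous_iff_continuousAt.2 fun s => (hνderiv s).continuousAt
  -- the norm function and its derivative
  set n : ℝ → ℝ := fun s => ‖u s‖ with hn
  set n' : ℝ → ℝ := fun s => derivWithin n (Ici (0:ℝ)) s with hn'
  have hnD : ∀ s, 0 ≤ s → HasDerivWithinAt n (n' s) (Ici (0:ℝ)) s :=
    fun s hs => (hnd s hs).hasDerivWithinAt
  -- Step A: differential inequality for n at points where n is positive
  have stepA : ∀ s, 0 ≤ s → 0 < n s →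
      n' s ≤ γ s * n s + α s * n (s - τ) ^ p + β s := by
    intro s hs hpos
    have hu1 : UniqueDiffWithinAt ℝ (Ici (0:ℝ)) s := uniqueDiffOn_Ici 0 s hs
    have hsq1 : HasDerivWithinAt (fun x => n x ^ 2) (2 * n s * n' s) (Ici (0:ℝ)) s := by
      have := (hnD s hs).fun_pow 2
      simpa [pow_one, mul_comm, mul_assoc, mul_left_comm] using this
    have hinner : HasDerivWithinAt (fun x => (⟪u x, u x⟫ : ℂ))
        (⟪u s, u' s⟫ + ⟪u' s, u s⟫) (Ici (0:ℝ)) s :=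
      (hud s hs).inner ℂ (hud s hs)
    have hre : HasDerivWithinAt (fun x => ((⟪u x, u x⟫ : ℂ)).re)
        ((⟪u s, u' s⟫ + ⟪u' s, u s⟫ : ℂ).re) (Ici (0:ℝ)) s := by
      have := (Complex.reCLM.hasFDerivAt).comp_hasDerivWithinAt s hinner
      simpa [Function.comp_def] using this
    have hfun : (fun x => ((⟪u x, u x⟫ : ℂ)).re) = fun x => n x ^ 2 := by
      funext x
      simpa using inner_self_eq_norm_sq (𝕜 := ℂ) (u x)
    rw [hfun] at hre
    have hval : (⟪u s, u' s⟫ + ⟪u' s, u s⟫ : ℂ).re = 2 * (⟪u s, u' s⟫ : ℂ).re := by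
      have : (⟪u' s, u s⟫ : ℂ) = starRingEnd ℂ ⟪u s, u' s⟫ := (inner_conj_symm _ _).symm
      rw [Complex.add_re, this, Complex.conj_re]; ring
    rw [hval] at hre
    have heq : 2 * n s * n' s = 2 * (⟪u s, u' s⟫ : ℂ).re :=
      (hsq1.derivWithin hu1).symm.trans (hre.derivWithin hu1)
    have hkey : n s * n' s ≤ n s * (γ s * n s + α s * n (s - τ) ^ p + β s) := by
      have h2 : n s * n' s = (⟪u s, u' s⟫ : ℂ).re := by linarith
      have h3 := huineq s hs
      have h4 : γ s * ‖u s‖ ^ 2 + α s * ‖u s‖ * ‖u (s - τ)‖ ^ p + β s * ‖u s‖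
          = n s * (γ s * n s + α s * n (s - τ) ^ p + β s) := by
        simp only [hn]; ring
      rw [h2]
      calc (⟪u s, u' s⟫ : ℂ).re ≤ _ := h3
        _ = _ := h4
    exact le_of_mul_le_mul_left hkey hpos
  -- Step B: ‖u s‖ ≤ h s for all s ≥ -τ
  have hncont : ContinuousOn n (Ici (-τ)) := huc.norm
  have key : ∀ k : ℕ, ∀ s, -τ ≤ s → s ≤ (k : ℝ) * τ → n s ≤ h s := by
    intro k
    induction k with
    | zero =>
      intro s h1 h2
      have h2' : s ≤ 0 := by simpa using h2
      exact (hinit s h1 h2').ge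
    | succ k ih =>
      set a : ℝ := (k : ℝ) * τ with hadef
      have ha0 : (0:ℝ) ≤ a := by positivity
      have hb : ((k:ℝ) + 1) * τ = a + τ := by ring
      have habs : a ≤ a + τ := by linarith
      -- bound for γ on the interval
      obtain ⟨C, hC⟩ : ∃ C, ∀ x ∈ Icc a (a + τ), γ x ≤ C := by
        obtain ⟨C, hC⟩ := isCompact_Icc.exists_bound_of_continuousOn
          (hγc.continuousOn (s := Icc a (a + τ)))
        exact ⟨C, fun x hx => le_trans (le_abs_self _)
          (by simpa [Real.norm_eq_abs] using hC x hx)⟩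
      set K : ℝ := C + 1 with hKdef
      have hIcc_sub : Icc a (a + τ) ⊆ Ici (-τ) := fun x hx => le_trans (by linarith) hx.1
      have main : ∀ ε : ℝ, 0 < ε → ∀ x ∈ Icc a (a + τ),
          n x ≤ h x + ε * Real.exp (K * (x - a)) := by
        intro ε hε
        have hBd : ∀ x : ℝ, HasDerivAt (fun y => ε * Real.exp (K * (y - a)))
            (ε * (Real.exp (K * (x - a)) * K)) x := by
          intro x
          have h1 : HasDerivAt (fun y : ℝ => K * (y - a)) K x := by
            simpa using ((hasDerivAt_id x).sub_const a).const_mul K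
          exact (h1.exp).const_mul ε
        apply image_le_of_deriv_right_lt_deriv_boundary'
          (f := n) (f' := n')
          (B := fun y => h y + ε * Real.exp (K * (y - a)))
          (B' := fun y => h' y + ε * (Real.exp (K * (y - a)) * K))
        · exact hncont.mono hIcc_sub
        · intro x hx
          exact (hnD x (le_trans ha0 hx.1)).mono (Ici_subset_Ici.2 (le_trans ha0 hx.1))
        · have h1 : n a ≤ h a := ih a (by linarith) le_rfl
          have h2 : 0 < ε * Real.exp (K * (a - a)) := by positivity
          linarith
        · exact ((hhc.mono hIcc_sub).add
            ((by fun_prop : Continuous fun y => ε * Real.exp (K * (y - a))).continuousOn))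
        · intro x hx
          have hx0 : (0:ℝ) ≤ x := le_trans ha0 hx.1
          exact (((hhd x hx0).mono (Ici_subset_Ici.2 hx0)).add ((hBd x).hasDerivWithinAt))
        · intro x hx htouch
          have hx0 : (0:ℝ) ≤ x := le_trans ha0 hx.1
          have hE : 0 < ε * Real.exp (K * (x - a)) := by positivity
          have hhx : 0 ≤ h x := hh0 x (by linarith)
          have hpos : 0 < n x := by rw [htouch]; linarith
          have hA := stepA x hx0 hpos
          have hdel : n (x - τ) ≤ h (x - τ) := ih (x - τ) (by linarith) (by
            have := hx.2; linarith)
          have hdelp : n (x - τ) ^ p ≤ h (x - τ) ^ p :=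
            Real.rpow_le_rpow (norm_nonneg _) hdel hp0
          have hγx : γ x < K := lt_of_le_of_lt (hC x (Ico_subset_Icc_self hx)) (by linarith)
          have hγK : γ x * (ε * Real.exp (K * (x - a))) < K * (ε * Real.exp (K * (x - a))) :=
            mul_lt_mul_of_pos_right hγx hE
          have hα' : α x * n (x - τ) ^ p ≤ α x * h (x - τ) ^ p :=
            mul_le_mul_of_nonneg_left hdelp (hα x)
          have hh' := hheq x hx0
          calc n' x ≤ γ x * n x + α x * n (x - τ) ^ p + β x := hA
            _ ≤ γ x * (h x + ε * Real.exp (K * (x - a))) + α x * h (x - τ) ^ p + β x := by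
                rw [htouch]; linarith
            _ = h' x + γ x * (ε * Real.exp (K * (x - a))) := by rw [hh']; ring
            _ < h' x + ε * (Real.exp (K * (x - a)) * K) := by
                have : ε * (Real.exp (K * (x - a)) * K) = K * (ε * Real.exp (K * (x - a))) := by
                  ring
                rw [this]; linarith
      intro s h1 h2
      rcases le_or_gt s a with hs | hs
      · exact ih s h1 hs
      · have hsmem : s ∈ Icc a (a + τ) := ⟨hs.le, by push_cast at h2; linarith [hb]⟩
        by_contra hcon
        push_neg at hcon
        set E : ℝ := Real.exp (K * (s - a)) with hEdef
        have hEpos : 0 < E := Real.exp_pos _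
        have hε : 0 < (n s - h s) / (2 * E) := by
          apply div_pos (by linarith) (by linarith)
        have := main _ hε s hsmem
        rw [← hEdef] at this
        have : n s ≤ h s + (n s - h s) / 2 := by
          have hE' : (n s - h s) / (2 * E) * E = (n s - h s) / 2 := by
            field_simp
          linarith [this, hE'.symm ▸ this]
        linarith
  have stepB : ∀ s, -τ ≤ s → n s ≤ h s := by
    intro s h1
    obtain ⟨k, hk⟩ := exists_nat_ge (s / τ)
    exact key k s h1 ((div_le_iff₀ hτ).1 hk)
  -- Step C: h(s-τ) ≤ σ(s) * h(s) for s ≥ τ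
  have hIci0_sub : Ici (0:ℝ) ⊆ Ici (-τ) := Ici_subset_Ici.2 (by linarith)
  have hmono : MonotoneOn (fun s => h s * nu γ s) (Ici (0:ℝ)) := by
    apply monotoneOn_of_deriv_nonneg (convex_Ici 0)
    · exact (hhc.mono hIci0_sub).mul hνcont.continuousOn
    · intro x hx
      rw [interior_Ici] at hx
      have hx0 : (0:ℝ) ≤ x := hx.le
      have hD : HasDerivAt (fun s => h s * nu γ s)
          (h' x * nu γ x + h x * (nu γ x * -γ x)) x :=
        (((hhd x hx0).hasDerivAt (Ici_mem_nhds hx)).mul (hνderiv x))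
      exact hD.differentiableAt.differentiableWithinAt
    · intro x hx
      rw [interior_Ici] at hx
      have hx0 : (0:ℝ) ≤ x := hx.le
      have hD : HasDerivAt (fun s => h s * nu γ s)
          (h' x * nu γ x + h x * (nu γ x * -γ x)) x :=
        (((hhd x hx0).hasDerivAt (Ici_mem_nhds hx)).mul (hνderiv x))
      rw [hD.deriv, hheq x hx0]
      have h1 : 0 ≤ h (x - τ) ^ p := Real.rpow_nonneg (hh0 _ (by linarith)) p
      have h2 : 0 ≤ nu γ x := (hν_pos x).le
      have : (γ x * h x + α x * h (x - τ) ^ p + β x) * nu γ x + h x * (nu γ x * -γ x)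
          = (α x * h (x - τ) ^ p + β x) * nu γ x := by ring
      rw [this]
      exact mul_nonneg (by nlinarith [hα x, hβ x]) h2
  have hσν : ∀ s : ℝ, nu γ s = nu γ (s - τ) * sig γ τ s := by
    intro s
    have hadd := intervalIntegral.integral_add_adjacent_intervals
      (hγc.intervalIntegrable (μ := volume) 0 (s - τ)) (hγc.intervalIntegrable (μ := volume) (s - τ) s)
    rw [nu, nu, sig, ← Real.exp_add]
    congr 1
    linarith [hadd]
  have stepC : ∀ s, τ ≤ s → h (s - τ) ≤ sig γ τ s * h s := by
    intro s hs
    have h1 : h (s - τ) * nu γ (s - τ) ≤ h s * nu γ s :=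
      hmono (show s - τ ∈ Ici (0:ℝ) by simp; linarith)
        (show s ∈ Ici (0:ℝ) by simp; linarith) (by linarith)
    have h2 : nu γ s = nu γ (s - τ) * sig γ τ s := hσν s
    have h3 : 0 < nu γ (s - τ) := hν_pos _
    rw [h2] at h1
    
    nlinarith [h1, h3]
  -- Step D: h s ≤ q * ζ s for s ≥ τ
  set Z : ℝ → ℝ := fun s => h τ * nu γ τ + ∫ ξ in τ..s, β ξ * nu γ ξ with hZdef
  have hβν : Continuous (fun ξ => β ξ * nu γ ξ) := hβc.mul hνcont
  have hZderiv : ∀ s : ℝ, HasDerivAt Z (β s * nu γ s) s := by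
    intro s
    have := (hβν.integral_hasStrictDerivAt τ s).hasDerivAt
    exact this.const_add _
  have hZcont : Continuous Z := continuous_iff_continuousAt.2 fun s => (hZderiv s).continuousAt
  have hζZ : ∀ s, τ ≤ s → ζ s * nu γ s = Z s := by
    intro s hs
    rw [hζ s hs]
    simp only [hZdef]
    exact div_mul_cancel₀ _ (hν_pos s).ne'
  set w : ℝ → ℝ := fun s => h s * nu γ s - q * Z s with hwdef
  have hwτ : w τ < 0 := by
    have : Z τ = h τ * nu γ τ := by simp [hZdef]
    simp only [hwdef, this]
    have hX : 0 < h τ * nu γ τ := mul_pos hhτ (hν_pos τ)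
    nlinarith [hX]
  have stepD : ∀ s, τ ≤ s → h s ≤ q * ζ s := by
    have hwneg : ∀ s, τ ≤ s → w s < 0 := by
      by_contra hcon
      push_neg at hcon
      obtain ⟨t₀, ht₀, hwt₀⟩ := hcon
      set S : Set ℝ := {s | s ∈ Ici τ ∧ 0 ≤ w s} with hSdef
      have hwcont : ContinuousOn w (Ici τ) := by
        apply ContinuousOn.sub
        · exact ((hhc.mono (Ici_subset_Ici.2 (by linarith))).mul hνcont.continuousOn)
        · exact (hZcont.continuousOn.const_smul q)
      have hScl : IsClosed S := by
        have : S = Ici τ ∩ w ⁻¹' (Ici 0) := by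
          ext x; simp [hSdef, and_comm]
        rw [this]
        exact hwcont.preimage_isClosed_of_isClosed isClosed_Ici isClosed_Ici
      have hSne : S.Nonempty := ⟨t₀, ht₀, hwt₀⟩
      have hSbdd : BddBelow S := ⟨τ, fun x hx => hx.1⟩
      set t₁ : ℝ := sInf S with ht₁def
      have ht₁S : t₁ ∈ S := hScl.csInf_mem hSne hSbdd
      have ht₁τ : τ < t₁ := by
        rcases lt_or_eq_of_le (mem_Ici.1 ht₁S.1) with h1 | h1
        · exact h1
        · exfalso; have h2 := ht₁S.2; rw [← h1] at h2; linarith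
      have hlt : ∀ x, τ ≤ x → x < t₁ → w x < 0 := by
        intro x hx1 hx2
        by_contra hc
        push_neg at hc
        exact absurd (csInf_le hSbdd ⟨hx1, hc⟩) (not_le.2 hx2)
      -- w is antitone on [τ, t₁]
      have hanti : AntitoneOn w (Icc τ t₁) := by
        apply antitoneOn_of_deriv_nonpos (convex_Icc τ t₁)
        · exact hwcont.mono Icc_subset_Ici_self
        · intro x hx
          rw [interior_Icc] at hx
          have hx0 : (0:ℝ) ≤ x := by linarith [hx.1]
          have hD : HasDerivAt w
              ((h' x * nu γ x + h x * (nu γ x * -γ x)) - q * (β x * nu γ x)) x := by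
            exact (((hhd x hx0).hasDerivAt (Ici_mem_nhds (by linarith [hx.1]))).mul
              (hνderiv x)).sub ((hZderiv x).const_mul q)
          exact hD.differentiableAt.differentiableWithinAt
        · intro x hx
          rw [interior_Icc] at hx
          have hxτ : τ ≤ x := hx.1.le
          have hx0 : (0:ℝ) ≤ x := by linarith
          have hD : HasDerivAt w
              ((h' x * nu γ x + h x * (nu γ x * -γ x)) - q * (β x * nu γ x)) x := by
            exact (((hhd x hx0).hasDerivAt (Ici_mem_nhds (by linarith [hx.1]))).mul
              (hνderiv x)).sub ((hZderiv x).const_mul q)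
          rw [hD.deriv, hheq x hx0]
          -- h x ≤ q * ζ x on [τ, t₁)
          have hwx : w x < 0 := hlt x hxτ hx.2
          have hZx : h x * nu γ x < q * Z x := by
            simpa [hwdef, sub_neg] using hwx
          have hζx : h x ≤ q * ζ x := by
            have h1 := hζZ x hxτ
            have h2 := hν_pos x
            nlinarith
          have hqζ0 : 0 ≤ q * ζ x := le_trans (hh0 x (by linarith)) hζx
          have hσ0 : 0 ≤ sig γ τ x := (Real.exp_pos _).le
          have hdel : h (x - τ) ≤ sig γ τ x * (q * ζ x) := by
            calc h (x - τ) ≤ sig γ τ x * h x := stepC x hxτ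
              _ ≤ sig γ τ x * (q * ζ x) := mul_le_mul_of_nonneg_left hζx hσ0
          have hdelp : h (x - τ) ^ p ≤ sig γ τ x ^ p * (q * ζ x) ^ p := by
            rw [← Real.mul_rpow hσ0 hqζ0]
            exact Real.rpow_le_rpow (hh0 _ (by linarith)) hdel hp0
          have hcx := hcond x hxτ
          have hαp : α x * h (x - τ) ^ p ≤ (q - 1) * β x := by
            calc α x * h (x - τ) ^ p ≤ α x * (sig γ τ x ^ p * (q * ζ x) ^ p) :=
                mul_le_mul_of_nonneg_left hdelp (hα x)
              _ = α x * sig γ τ x ^ p * (q * ζ x) ^ p := by ring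
              _ ≤ (q - 1) * β x := hcx
          have hν0 : 0 ≤ nu γ x := (hν_pos x).le
          have heq1 : (γ x * h x + α x * h (x - τ) ^ p + β x) * nu γ x
              + h x * (nu γ x * -γ x) - q * (β x * nu γ x)
              = (α x * h (x - τ) ^ p - (q - 1) * β x) * nu γ x := by ring
          rw [heq1]
          exact mul_nonpos_of_nonpos_of_nonneg (by linarith) hν0
      have hcontra := hanti (left_mem_Icc.2 ht₁τ.le) (right_mem_Icc.2 ht₁τ.le) ht₁τ.le
      linarith [ht₁S.2]
    intro s hs
    have h1 := hwneg s hs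
    have h2 : h s * nu γ s < q * Z s := by simpa [hwdef, sub_neg] using h1
    have h3 := hζZ s hs
    have h4 := hν_pos s
    nlinarith
  intro t ht
  exact le_trans (stepB t (by linarith)) (stepD t ht)
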